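/- Under the stated assumptions on the degenerate diffusion coefficient a, the embedding of the weighted Sobolev space H¹_a(Ω) into L²(Ω) is compact; in particular there exists a constant C > 0 such that ‖y‖_{L²(Ω)} ≤ C‖y‖_{H¹_a(Ω)} for every y ∈ H¹_a(Ω). -/

import Mathlib

open MeasureTheory Real Set Filter Classical

noncomputable section

namespace DegenerateControl

/-- The spatial domain `Ω = (-1, 1)`. -/
def Omg : Set ℝ := Set.Ioo (-1 : ℝ) 1

/-- Lebesgue measure restricted to `Ω`. -/
def muO : Measure ℝ := volume.restrict Omg

/-- Lebesgue measure restricted to the time interval `(0, T)`. -/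
def muT (T : ℝ) : Measure ℝ := volume.restrict (Set.Ioc 0 T)

/-- Product measure on `Q = (0,T) × Ω`. -/
def muQ (T : ℝ) : Measure (ℝ × ℝ) := (muT T).prod muO

/-- Product measure on `ω_T = (0,T) × ω`. -/
def muW (T : ℝ) (w : Set ℝ) : Measure (ℝ × ℝ) := (muT T).prod (volume.restrict w)

/-- The zero function of two variables. -/
def zf : ℝ → ℝ → ℝ := fun _ _ => 0

/-- The zero function of one variable. -/
def zO : ℝ → ℝ := fun _ => 0

/-- Assumption 1.1 on the degenerate diffusion coefficient `a`:
`a ∈ C¹([-1,1])`, `a > 0` in `(-1,1)`, `a(±1) = 0`, and `x ↦ ∫₀ˣ ds / a(s)`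
belongs to `L¹(-1,1)`. -/
structure DiffCoeff (a : ℝ → ℝ) : Prop where
  contDiff : ContDiffOn ℝ 1 a (Set.Icc (-1 : ℝ) 1)
  pos : ∀ x ∈ Omg, 0 < a x
  zero_left : a (-1) = 0
  zero_right : a 1 = 0
  int_inv : IntegrableOn (fun x => ∫ s in (0 : ℝ)..x, 1 / a s) Omg

/-- `u` is locally absolutely continuous on `Ω`: on every pair of points of `Ω`,
`u` is the integral of its derivative. -/
def LocAbsCont (u : ℝ → ℝ) : Prop :=
  ∀ c ∈ Omg, ∀ x ∈ Omg,
    IntervalIntegrable (deriv u) volume c x ∧ u x = u c + ∫ s in c..x, deriv u s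

/-- Membership in the weighted Sobolev space `H¹_a(Ω)`. -/
def MemH1a (a : ℝ → ℝ) (u : ℝ → ℝ) : Prop :=
  MemLp u 2 muO ∧ LocAbsCont u ∧
    MemLp (fun x => Real.sqrt (a x) * deriv u x) 2 muO

/-- The squared `L²(Ω)` norm. -/
def L2sq (u : ℝ → ℝ) : ℝ := ∫ x, (u x) ^ 2 ∂muO

/-- The `L²(Ω)` norm. -/
def L2norm (u : ℝ → ℝ) : ℝ := Real.sqrt (L2sq u)

/-- The squared `H¹_a(Ω)` norm: `‖u‖² = ‖u‖²_{L²} + ‖√a u_x‖²_{L²}`. -/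
def H1aSq (a u : ℝ → ℝ) : ℝ := L2sq u + ∫ x, a x * (deriv u x) ^ 2 ∂muO

/-- The `H¹_a(Ω)` norm. -/
def H1aNorm (a u : ℝ → ℝ) : ℝ := Real.sqrt (H1aSq a u)

/-- The dual norm of a functional `F` on `H¹_a(Ω)`. -/
def dualNorm (a : ℝ → ℝ) (F : (ℝ → ℝ) → ℝ) : ℝ :=
  sSup {r : ℝ | ∃ φ, MemH1a a φ ∧ H1aNorm a φ ≤ 1 ∧ r = F φ}

/-- Membership `F ∈ L²(0,T;(H¹_a(Ω))')`: for (a.e.) `t`, `F t` is a bounded linear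
functional on `H¹_a(Ω)`, and its dual norm is square integrable in time. -/
def MemL2Dual (a : ℝ → ℝ) (T : ℝ) (F : ℝ → (ℝ → ℝ) → ℝ) : Prop :=
  (∀ t, ∀ φ ψ : ℝ → ℝ, MemH1a a φ → MemH1a a ψ → F t (φ + ψ) = F t φ + F t ψ) ∧
  (∀ t, ∀ (c : ℝ) (φ : ℝ → ℝ), MemH1a a φ → F t (c • φ) = c * F t φ) ∧
  (∀ t, ∀ φ : ℝ → ℝ, MemH1a a φ → |F t φ| ≤ dualNorm a (F t) * H1aNorm a φ) ∧
  Integrable (fun t => (dualNorm a (F t)) ^ 2) (muT T)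

/-- The `L²(0,T;(H¹_a(Ω))')` norm. -/
def L2DualNorm (a : ℝ → ℝ) (T : ℝ) (F : ℝ → (ℝ → ℝ) → ℝ) : ℝ :=
  Real.sqrt (∫ t, (dualNorm a (F t)) ^ 2 ∂muT T)

/-- The space `H(Q)` of test functions: `φ ∈ L²(0,T;H¹_a(Ω))`,
`φ_t ∈ L²(Q)` and `φ(T,·) = 0`. -/
structure TestFun (a : ℝ → ℝ) (T : ℝ) (φ : ℝ → ℝ → ℝ) : Prop where
  memH1a : ∀ t ∈ Set.Icc 0 T, MemH1a a (φ t)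
  sqInt : Integrable (fun t => H1aSq a (φ t)) (muT T)
  timeDeriv : MemLp (fun q : ℝ × ℝ => deriv (fun s => φ s q.2) q.1) 2 (muQ T)
  measQ : AEStronglyMeasurable (Function.uncurry φ) (muQ T)
  final : ∀ x ∈ Omg, φ T x = 0

/-- Membership in `W_a(0,T)`: `p ∈ L²(0,T;H¹_a(Ω))` and the distributional time
derivative of `p` is represented by a family of functionals belonging to
`L²(0,T;(H¹_a(Ω))')`; in particular `p ∈ C([0,T];L²(Ω))`. -/
structure MemWa (a : ℝ → ℝ) (T : ℝ) (p : ℝ → ℝ → ℝ) : Prop where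
  measQ : AEStronglyMeasurable (Function.uncurry p) (muQ T)
  memH1a : ∀ᵐ t ∂muT T, MemH1a a (p t)
  sqInt : Integrable (fun t => H1aSq a (p t)) (muT T)
  contL2 : ∀ t ∈ Set.Icc 0 T,
    Tendsto (fun s => L2norm (fun x => p s x - p t x)) (nhdsWithin t (Set.Icc 0 T)) (nhds 0)
  timeDerivDual : ∃ F : ℝ → (ℝ → ℝ) → ℝ,
    Integrable (fun t => (dualNorm a (F t)) ^ 2) (muT T) ∧
    ∀ φ : ℝ → ℝ → ℝ, TestFun a T φ →
      -(∫ q : ℝ × ℝ, deriv (fun s => φ s q.2) q.1 * p q.1 q.2 ∂muQ T)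
        = (∫ t, F t (φ t) ∂muT T) + ∫ x, p 0 x * φ 0 x ∂muO

/-- Weak solution of `p_t - (a(x) p_x)_x = (v p + g) χ_ω + f` in `Q`,
`a p_x = 0` on the lateral boundary, `p(0,·) = p0`, in the sense of
the variational identity of Definition 2.3. -/
def IsWeakSol (a : ℝ → ℝ) (T : ℝ) (ω : Set ℝ) (v g f : ℝ → ℝ → ℝ)
    (p0 : ℝ → ℝ) (p : ℝ → ℝ → ℝ) : Prop :=
  MemWa a T p ∧
  ∀ φ : ℝ → ℝ → ℝ, TestFun a T φ →
    -(∫ q : ℝ × ℝ, deriv (fun s => φ s q.2) q.1 * p q.1 q.2 ∂muQ T)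
      + (∫ q : ℝ × ℝ, a q.2 * deriv (p q.1) q.2 * deriv (φ q.1) q.2 ∂muQ T)
      - (∫ q : ℝ × ℝ, v q.1 q.2 * p q.1 q.2 * φ q.1 q.2 ∂muW T ω)
      = (∫ x, p0 x * φ 0 x ∂muO)
        + (∫ q : ℝ × ℝ, g q.1 q.2 * φ q.1 q.2 ∂muW T ω)
        + (∫ q : ℝ × ℝ, f q.1 q.2 * φ q.1 q.2 ∂muQ T)

/-- Weak solution of `p_t - (a(x) p_x)_x = v χ_ω p + f` with a source
`f ∈ L²(0,T;(H¹_a(Ω))')` represented by the family of functionals `F`. -/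
def IsWeakSolD (a : ℝ → ℝ) (T : ℝ) (ω : Set ℝ) (v : ℝ → ℝ → ℝ)
    (F : ℝ → (ℝ → ℝ) → ℝ) (p0 : ℝ → ℝ) (p : ℝ → ℝ → ℝ) : Prop :=
  MemWa a T p ∧
  ∀ φ : ℝ → ℝ → ℝ, TestFun a T φ →
    -(∫ q : ℝ × ℝ, deriv (fun s => φ s q.2) q.1 * p q.1 q.2 ∂muQ T)
      + (∫ q : ℝ × ℝ, a q.2 * deriv (p q.1) q.2 * deriv (φ q.1) q.2 ∂muQ T)
      - (∫ q : ℝ × ℝ, v q.1 q.2 * p q.1 q.2 * φ q.1 q.2 ∂muW T ω)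
      = (∫ x, p0 x * φ 0 x ∂muO) + ∫ t, F t (φ t) ∂muT T

/-- The `C([0,T];L²(Ω))` norm. -/
def normC (T : ℝ) (p : ℝ → ℝ → ℝ) : ℝ :=
  sSup ((fun t => L2norm (p t)) '' Set.Icc 0 T)

/-- The `L²(0,T;H¹_a(Ω))` norm. -/
def normL2H1a (a : ℝ → ℝ) (T : ℝ) (p : ℝ → ℝ → ℝ) : ℝ :=
  Real.sqrt (∫ t, H1aSq a (p t) ∂muT T)

/-- The `L^∞(ω_T)` norm. -/
def LinfW (T : ℝ) (ω : Set ℝ) (v : ℝ → ℝ → ℝ) : ℝ :=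
  (eLpNorm (Function.uncurry v) ⊤ (muW T ω)).toReal

/-- The `L^∞(Q)` norm. -/
def LinfQ (T : ℝ) (f : ℝ → ℝ → ℝ) : ℝ :=
  (eLpNorm (Function.uncurry f) ⊤ (muQ T)).toReal

/-- The `L^∞(Ω)` norm. -/
def LinfO (g : ℝ → ℝ) : ℝ := (eLpNorm g ⊤ muO).toReal

/-- The `L²(ω_T)` norm. -/
def L2W (T : ℝ) (ω : Set ℝ) (v : ℝ → ℝ → ℝ) : ℝ :=
  Real.sqrt (∫ q : ℝ × ℝ, (v q.1 q.2) ^ 2 ∂muW T ω)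

/-- `v ∈ L^∞(ω_T)`. -/
def MemLinfW (T : ℝ) (ω : Set ℝ) (v : ℝ → ℝ → ℝ) : Prop :=
  MemLp (Function.uncurry v) ⊤ (muW T ω)

/-- `f ∈ L^∞(Q)`. -/
def MemLinfQ (T : ℝ) (f : ℝ → ℝ → ℝ) : Prop :=
  MemLp (Function.uncurry f) ⊤ (muQ T)

/-- `g ∈ L^∞(Ω)`. -/
def MemLinfO (g : ℝ → ℝ) : Prop := MemLp g ⊤ muO

/-- `v ∈ L²(ω_T)`. -/
def MemL2W (T : ℝ) (ω : Set ℝ) (v : ℝ → ℝ → ℝ) : Prop :=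
  MemLp (Function.uncurry v) 2 (muW T ω)

/-- The control-to-state map `G`, obtained by choosing, for each control `v`,
a weak solution of the bilinear state equation (when one exists). -/
def Gmap (a : ℝ → ℝ) (T : ℝ) (ω : Set ℝ) (y0 : ℝ → ℝ) (v : ℝ → ℝ → ℝ) : ℝ → ℝ → ℝ :=
  if h : ∃ y, IsWeakSol a T ω v zf zf y0 y then Classical.choose h else zf

/-- `q` is the adjoint state associated to the control `u`:
after the change of variable `t ↦ T - t`, it solves the forward problem
with control `u(T-·)` and initial datum `G(u)(T,·) - y^d`. -/
def IsAdjointSol (a : ℝ → ℝ) (T : ℝ) (ω : Set ℝ) (y0 yd : ℝ → ℝ)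
    (u q : ℝ → ℝ → ℝ) : Prop :=
  IsWeakSol a T ω (fun t x => u (T - t) x) zf zf
    (fun x => Gmap a T ω y0 u T x - yd x) (fun t x => q (T - t) x)

/-- The adjoint state map, obtained by choice. -/
def Qmap (a : ℝ → ℝ) (T : ℝ) (ω : Set ℝ) (y0 yd : ℝ → ℝ)
    (u : ℝ → ℝ → ℝ) : ℝ → ℝ → ℝ :=
  if h : ∃ q, IsAdjointSol a T ω y0 yd u q then Classical.choose h else zf

/-- `ρ` solves the linearized state equation at `u` in the direction `w`:
`ρ_t - (a ρ_x)_x = (u ρ + w G(u)) χ_ω`, `ρ(0,·) = 0`. -/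
def IsLinSol (a : ℝ → ℝ) (T : ℝ) (ω : Set ℝ) (y0 : ℝ → ℝ)
    (u w ρ : ℝ → ℝ → ℝ) : Prop :=
  IsWeakSol a T ω u (fun t x => w t x * Gmap a T ω y0 u t x) zf zO ρ

/-- The derivative `G'(u)w` of the control-to-state map, obtained by choice. -/
def Gprime (a : ℝ → ℝ) (T : ℝ) (ω : Set ℝ) (y0 : ℝ → ℝ)
    (u w : ℝ → ℝ → ℝ) : ℝ → ℝ → ℝ :=
  if h : ∃ ρ, IsLinSol a T ω y0 u w ρ then Classical.choose h else zf

/-- The cost functional `J(y,v) = ½‖y(T)-y^d‖²_{L²(Ω)} + (α/2)‖v‖²_{L²(ω_T)}`. -/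
def cost (α T : ℝ) (ω : Set ℝ) (yd : ℝ → ℝ) (y v : ℝ → ℝ → ℝ) : ℝ :=
  (1 / 2) * (∫ x, (y T x - yd x) ^ 2 ∂muO)
    + (α / 2) * ∫ q : ℝ × ℝ, (v q.1 q.2) ^ 2 ∂muW T ω

/-- The reduced cost functional `𝒥(v) = J(G(v),v)`. -/
def Jred (a : ℝ → ℝ) (α T : ℝ) (ω : Set ℝ) (y0 yd : ℝ → ℝ)
    (v : ℝ → ℝ → ℝ) : ℝ :=
  cost α T ω yd (Gmap a T ω y0 v) v

/-- The admissible set `U = {w ∈ L^∞(ω_T) : m ≤ w ≤ M}`. -/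
def InU (T : ℝ) (ω : Set ℝ) (m M : ℝ) (v : ℝ → ℝ → ℝ) : Prop :=
  MemLinfW T ω v ∧ ∀ᵐ q ∂muW T ω, v q.1 q.2 ∈ Set.Icc m M

/-- The first derivative of the reduced cost:
`𝒥'(u)v = ∫_{ω_T} (α u + G(u) q(u)) v`. -/
def Jprime (a : ℝ → ℝ) (α T : ℝ) (ω : Set ℝ) (y0 yd : ℝ → ℝ)
    (u v : ℝ → ℝ → ℝ) : ℝ :=
  ∫ q : ℝ × ℝ, (α * u q.1 q.2
    + Gmap a T ω y0 u q.1 q.2 * Qmap a T ω y0 yd u q.1 q.2) * v q.1 q.2 ∂muW T ω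

/-- The second derivative of the reduced cost:
`𝒥''(u)[w,h] = ∫_{ω_T} (h G'(u)w + w G'(u)h) q + ∫_Ω (G'(u)w)(T)(G'(u)h)(T) + α ∫_{ω_T} h w`. -/
def Jsecond (a : ℝ → ℝ) (α T : ℝ) (ω : Set ℝ) (y0 yd : ℝ → ℝ)
    (u w h : ℝ → ℝ → ℝ) : ℝ :=
  (∫ q : ℝ × ℝ, (h q.1 q.2 * Gprime a T ω y0 u w q.1 q.2
      + w q.1 q.2 * Gprime a T ω y0 u h q.1 q.2)
      * Qmap a T ω y0 yd u q.1 q.2 ∂muW T ω)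
    + (∫ x, Gprime a T ω y0 u w T x * Gprime a T ω y0 u h T x ∂muO)
    + α * ∫ q : ℝ × ℝ, h q.1 q.2 * w q.1 q.2 ∂muW T ω

/-- `u` is an `L^∞`-local solution of the optimal control problem. -/
def IsLocalMin (a : ℝ → ℝ) (α T : ℝ) (ω : Set ℝ) (y0 yd : ℝ → ℝ) (m M : ℝ)
    (u : ℝ → ℝ → ℝ) : Prop :=
  InU T ω m M u ∧ ∃ ε > 0, ∀ v, InU T ω m M v →
    LinfW T ω (fun t x => v t x - u t x) < ε →
    Jred a α T ω y0 yd u ≤ Jred a α T ω y0 yd v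


variable {a u : ℝ → ℝ} {c x : ℝ}

lemma omg_open : IsOpen Omg := isOpen_Ioo
lemma omg_meas : MeasurableSet Omg := measurableSet_Ioo
lemma zero_mem : (0:ℝ) ∈ Omg := by constructor <;> norm_num
lemma icc_sub (hc : c ∈ Omg) (hx : x ∈ Omg) : Icc c x ⊆ Omg :=
  Set.ordConnected_Ioo.out hc hx
lemma uIcc_sub (hc : c ∈ Omg) (hx : x ∈ Omg) : uIcc c x ⊆ Omg :=
  Set.ordConnected_Ioo.uIcc_subset hc hx

def Hfun (a : ℝ → ℝ) : ℝ → ℝ := fun x => ∫ s in (0:ℝ)..x, 1 / a s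

lemma acont (ha : DiffCoeff a) : ContinuousOn a Omg :=
  ha.contDiff.continuousOn.mono Ioo_subset_Icc_self

lemma inv_cont (ha : DiffCoeff a) : ContinuousOn (fun s => 1 / a s) Omg :=
  continuousOn_const.div (acont ha) (fun x hx => (ha.pos x hx).ne')

lemma intInv (ha : DiffCoeff a) (hc : c ∈ Omg) (hx : x ∈ Omg) :
    IntervalIntegrable (fun s => 1 / a s) volume c x :=
  ((inv_cont ha).mono (uIcc_sub hc hx)).intervalIntegrable

lemma H_sub (ha : DiffCoeff a) (hc : c ∈ Omg) (hx : x ∈ Omg) :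
    Hfun a x - Hfun a c = ∫ s in c..x, 1 / a s :=
  intervalIntegral.integral_interval_sub_left (intInv ha zero_mem hx) (intInv ha zero_mem hc)

lemma H_mono (ha : DiffCoeff a) (hc : c ∈ Omg) (hx : x ∈ Omg) (hcx : c ≤ x) :
    Hfun a c ≤ Hfun a x := by
  rw [← sub_nonneg, H_sub ha hc hx]
  refine intervalIntegral.integral_nonneg hcx (fun s hs => ?_)
  have hsΩ : s ∈ Omg := icc_sub hc hx hs
  have := ha.pos s hsΩ
  positivity

lemma H_contAt (ha : DiffCoeff a) (hx : x ∈ Omg) : ContinuousAt (Hfun a) x := by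
  have hca : ContinuousAt (fun s => 1 / a s) x :=
    (inv_cont ha).continuousAt (omg_open.mem_nhds hx)
  exact (intervalIntegral.integral_hasDerivAt_right (intInv ha zero_mem hx)
    ((inv_cont ha).stronglyMeasurableAtFilter omg_open x hx) hca).continuousAt

end DegenerateControl

namespace DegenerateControl2
open DegenerateControl

variable {a u : ℝ → ℝ} {c x : ℝ}

lemma ae_mem_omg : ∀ᵐ x ∂muO, x ∈ Omg := ae_restrict_mem omg_meas

lemma energy_eq (ha : DiffCoeff a) :
    (∫ x, a x * (deriv u x) ^ 2 ∂muO) = ∫ x, (Real.sqrt (a x) * deriv u x) ^ 2 ∂muO := by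
  refine integral_congr_ae ?_
  filter_upwards [ae_mem_omg] with x hx
  rw [mul_pow, Real.sq_sqrt (ha.pos x hx).le]

lemma sq_integrable (hu : MemH1a a u) : Integrable (fun x => (u x) ^ 2) muO :=
  (memLp_two_iff_integrable_sq hu.1.aestronglyMeasurable).mp hu.1

lemma Esq_integrable (hu : MemH1a a u) :
    Integrable (fun x => (Real.sqrt (a x) * deriv u x) ^ 2) muO :=
  (memLp_two_iff_integrable_sq hu.2.2.aestronglyMeasurable).mp hu.2.2

lemma key_est (ha : DiffCoeff a) (hu : MemH1a a u) {C : ℝ} (hC : 0 ≤ C)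
    (hE : ∫ s, (Real.sqrt (a s) * deriv u s) ^ 2 ∂muO ≤ C ^ 2)
    (hc : c ∈ Omg) (hx : x ∈ Omg) (hcx : c ≤ x) :
    |u x - u c| ≤ C * Real.sqrt (Hfun a x - Hfun a c) := by
  have hS : Ioc c x ⊆ Omg := Subset.trans Ioc_subset_Icc_self (icc_sub hc hx)
  set μ' := volume.restrict (Ioc c x) with hμ'
  have hmem : ∀ᵐ s ∂μ', s ∈ Ioc c x := ae_restrict_mem measurableSet_Ioc
  have h1 : |u x - u c| ≤ ∫ s in c..x, |deriv u s| := by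
    rw [(hu.2.1 c hc x hx).2]
    simpa using intervalIntegral.abs_integral_le_integral_abs (f := deriv u) hcx
  set f : ℝ → ℝ := fun s => Real.sqrt (a s) * |deriv u s| with hf
  set g : ℝ → ℝ := fun s => (Real.sqrt (a s))⁻¹ with hg
  have h2 : (∫ s in c..x, |deriv u s|) = ∫ s, f s * g s ∂μ' := by
    rw [intervalIntegral.integral_of_le hcx]
    refine setIntegral_congr_fun measurableSet_Ioc (fun s hs => ?_)
    have hsa : 0 < a s := ha.pos s (hS hs)
    have hne : Real.sqrt (a s) ≠ 0 := by positivity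
    show |deriv u s| = Real.sqrt (a s) * |deriv u s| * (Real.sqrt (a s))⁻¹
    rw [mul_comm (Real.sqrt (a s)) _, mul_assoc, mul_inv_cancel₀ hne, mul_one]
  have hsqrtm : AEStronglyMeasurable (fun s => Real.sqrt (a s)) μ' :=
    (Real.continuous_sqrt.comp_continuousOn ((acont ha).mono hS)).aestronglyMeasurable
      measurableSet_Ioc
  have hfm : AEStronglyMeasurable f μ' :=
    hsqrtm.mul ((measurable_deriv u).abs.aestronglyMeasurable)
  have hgm : AEStronglyMeasurable g μ' := hsqrtm.aemeasurable.inv.aestronglyMeasurable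
  have hfi2 : Integrable (fun s => f s ^ 2) μ' := by
    have hbig : IntegrableOn (fun s => (Real.sqrt (a s) * deriv u s) ^ 2) Omg volume :=
      Esq_integrable hu
    have heq : (fun s => f s ^ 2) = fun s => (Real.sqrt (a s) * deriv u s) ^ 2 := by
      funext s; simp [hf, mul_pow, sq_abs]
    rw [heq]; exact hbig.mono_set hS
  have hgi2eq : ∀ s ∈ Ioc c x, g s ^ 2 = 1 / a s := by
    intro s hs
    have hsa := (ha.pos s (hS hs)).le
    simp [hg, inv_pow, Real.sq_sqrt hsa, one_div]
  have hgi2 : Integrable (fun s => g s ^ 2) μ' := by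
    have h1a : IntegrableOn (fun s => 1 / a s) (Ioc c x) volume :=
      (intervalIntegrable_iff_integrableOn_Ioc_of_le hcx).mp (intInv ha hc hx)
    exact h1a.congr_fun (fun s hs => (hgi2eq s hs).symm) measurableSet_Ioc
  have h2e : ENNReal.ofReal (2:ℝ) = 2 := by norm_num
  have hf2 : MemLp f (ENNReal.ofReal (2:ℝ)) μ' := by
    rw [h2e]; exact (memLp_two_iff_integrable_sq hfm).mpr hfi2
  have hg2 : MemLp g (ENNReal.ofReal (2:ℝ)) μ' := by
    rw [h2e]; exact (memLp_two_iff_integrable_sq hgm).mpr hgi2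
  have hfnn : 0 ≤ᵐ[μ'] f := Eventually.of_forall (fun s => by positivity)
  have hgnn : 0 ≤ᵐ[μ'] g := Eventually.of_forall (fun s => by positivity)
  have hconj : Real.HolderConjugate 2 2 := Real.HolderConjugate.two_two
  have hold := integral_mul_le_Lp_mul_Lq_of_nonneg hconj hfnn hgnn hf2 hg2
  have hrw : ∀ φ : ℝ → ℝ, (∫ s, φ s ^ (2:ℝ) ∂μ') = ∫ s, φ s ^ 2 ∂μ' := fun φ =>
    integral_congr_ae (Eventually.of_forall (fun s => Real.rpow_two (φ s)))
  rw [hrw f, hrw g, ← Real.sqrt_eq_rpow, ← Real.sqrt_eq_rpow] at hold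
  have hfle : Real.sqrt (∫ s, f s ^ 2 ∂μ') ≤ C := by
    have hmono : (∫ s, f s ^ 2 ∂μ') ≤ ∫ s, (Real.sqrt (a s) * deriv u s) ^ 2 ∂muO := by
      have heq : (fun s => f s ^ 2) = fun s => (Real.sqrt (a s) * deriv u s) ^ 2 := by
        funext s; simp [hf, mul_pow, sq_abs]
      rw [heq]
      exact setIntegral_mono_set (Esq_integrable hu)
        (Eventually.of_forall (fun s => sq_nonneg _)) (HasSubset.Subset.eventuallyLE hS)
    calc Real.sqrt (∫ s, f s ^ 2 ∂μ') ≤ Real.sqrt (C ^ 2) :=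
          Real.sqrt_le_sqrt (hmono.trans hE)
      _ = C := Real.sqrt_sq hC
  have hgeq : Real.sqrt (∫ s, g s ^ 2 ∂μ') = Real.sqrt (Hfun a x - Hfun a c) := by
    congr 1
    rw [H_sub ha hc hx, intervalIntegral.integral_of_le hcx]
    exact setIntegral_congr_fun measurableSet_Ioc hgi2eq
  rw [hgeq] at hold
  calc |u x - u c| ≤ ∫ s, f s * g s ∂μ' := h1.trans_eq h2
    _ ≤ Real.sqrt (∫ s, f s ^ 2 ∂μ') * Real.sqrt (Hfun a x - Hfun a c) := hold
    _ ≤ C * Real.sqrt (Hfun a x - Hfun a c) :=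
        mul_le_mul_of_nonneg_right hfle (Real.sqrt_nonneg _)

end DegenerateControl2

namespace DegenerateControl3
open DegenerateControl DegenerateControl2

variable {a u : ℝ → ℝ} {c x : ℝ} {C : ℝ}

lemma half_mem : (1/2 : ℝ) ∈ Omg := by constructor <;> norm_num
lemma neg_half_mem : (-(1/2) : ℝ) ∈ Omg := by constructor <;> norm_num

lemma key_est_abs (ha : DiffCoeff a) (hu : MemH1a a u) (hC : 0 ≤ C)
    (hE : ∫ s, (Real.sqrt (a s) * deriv u s) ^ 2 ∂muO ≤ C ^ 2)
    (hc : c ∈ Omg) (hx : x ∈ Omg) :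
    |u x - u c| ≤ C * Real.sqrt |Hfun a x - Hfun a c| := by
  rcases le_total c x with h | h
  · rw [abs_of_nonneg (sub_nonneg.2 (H_mono ha hc hx h))]
    exact key_est ha hu hC hE hc hx h
  · rw [abs_sub_comm (u x), abs_sub_comm (Hfun a x),
      abs_of_nonneg (sub_nonneg.2 (H_mono ha hx hc h))]
    exact key_est ha hu hC hE hx hc h

lemma exists_small (hu : MemH1a a u) (hC : 0 < C) (hL2 : L2sq u ≤ C ^ 2) :
    ∃ x₀ ∈ Icc (-(1/2) : ℝ) (1/2), (u x₀) ^ 2 ≤ 2 * C ^ 2 := by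
  by_contra hcon
  push_neg at hcon
  have hsub : Ioo (-(1/2) : ℝ) (1/2) ⊆ Omg := fun s hs =>
    ⟨by linarith [hs.1], by linarith [hs.2]⟩
  have hbig : IntegrableOn (fun s => (u s) ^ 2) Omg volume := sq_integrable hu
  have hint : IntegrableOn (fun s => (u s) ^ 2) (Ioo (-(1/2) : ℝ) (1/2)) volume :=
    hbig.mono_set hsub
  have h1 : 2 * C ^ 2 * (volume (Ioo (-(1/2) : ℝ) (1/2))).toReal
      ≤ ∫ s in Ioo (-(1/2) : ℝ) (1/2), (u s) ^ 2 := by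
    refine setIntegral_ge_of_const_le_real measurableSet_Ioo (by simp) ?_ hint
    exact fun s hs => (hcon s (Ioo_subset_Icc_self hs)).le
  have hvol : (volume (Ioo (-(1/2) : ℝ) (1/2))).toReal = 1 := by
    rw [Real.volume_Ioo]; norm_num
  have h2 : (∫ s in Ioo (-(1/2) : ℝ) (1/2), (u s) ^ 2) ≤ L2sq u :=
    setIntegral_mono_set (sq_integrable hu)
      (Eventually.of_forall (fun s => sq_nonneg _)) (HasSubset.Subset.eventuallyLE hsub)
  rw [hvol, mul_one] at h1
  nlinarith

/-- The constant `M` bounding `|Hfun a|` on `[-1/2, 1/2]`. -/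
def Mc (a : ℝ → ℝ) : ℝ := |Hfun a (-(1/2))| + |Hfun a (1/2)|

lemma Mc_nonneg : 0 ≤ Mc a := add_nonneg (abs_nonneg _) (abs_nonneg _)

lemma abs_H_le (ha : DiffCoeff a) {t : ℝ} (ht : t ∈ Icc (-(1/2) : ℝ) (1/2)) :
    |Hfun a t| ≤ Mc a := by
  have htΩ : t ∈ Omg := ⟨by linarith [ht.1], by linarith [ht.2]⟩
  have h1 := H_mono ha neg_half_mem htΩ ht.1
  have h2 := H_mono ha htΩ half_mem ht.2
  rw [abs_le]
  constructor
  · have := neg_abs_le (Hfun a (-(1/2)))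
    have := abs_nonneg (Hfun a (1/2))
    unfold Mc; linarith
  · have := le_abs_self (Hfun a (1/2))
    have := abs_nonneg (Hfun a (-(1/2)))
    unfold Mc; linarith

/-- The dominating function. -/
def Gd (a : ℝ → ℝ) (C : ℝ) : ℝ → ℝ := fun x => 4 * C ^ 2 + 2 * C ^ 2 * (|Hfun a x| + Mc a)

lemma Gd_nonneg (hC : 0 ≤ C) (x : ℝ) : 0 ≤ Gd a C x := by
  have h1 := abs_nonneg (Hfun a x)
  have h2 := Mc_nonneg (a := a)
  unfold Gd; positivity

lemma Gd_integrable (ha : DiffCoeff a) (C : ℝ) : Integrable (Gd a C) muO := by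
  have h1 : IntegrableOn (fun x => |Hfun a x|) Omg volume := ha.int_inv.abs
  have hconst : ∀ k : ℝ, Integrable (fun _ : ℝ => k) muO := fun k => by
    refine (integrableOn_const_iff enorm_ne_top).mpr (Or.inr ?_)
    show volume Omg < ⊤
    rw [Omg, Real.volume_Ioo]
    exact ENNReal.ofReal_lt_top
  exact (hconst _).add (((h1.add (hconst _)).const_mul _))

lemma pointwise_bound (ha : DiffCoeff a) (hu : MemH1a a u) (hC : 0 < C)
    (hL2 : L2sq u ≤ C ^ 2)
    (hE : ∫ s, (Real.sqrt (a s) * deriv u s) ^ 2 ∂muO ≤ C ^ 2)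
    (hx : x ∈ Omg) : (u x) ^ 2 ≤ Gd a C x := by
  obtain ⟨x₀, hx₀, hx₀sq⟩ := exists_small hu hC hL2
  have hx₀Ω : x₀ ∈ Omg := ⟨by linarith [hx₀.1], by linarith [hx₀.2]⟩
  have hest := key_est_abs ha hu hC.le hE hx₀Ω hx
  have hHb := abs_H_le ha hx₀
  have habs : |Hfun a x - Hfun a x₀| ≤ |Hfun a x| + Mc a := by
    calc |Hfun a x - Hfun a x₀| ≤ |Hfun a x| + |Hfun a x₀| := abs_sub _ _
      _ ≤ |Hfun a x| + Mc a := by linarith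
  have hs : Real.sqrt |Hfun a x - Hfun a x₀| ^ 2 = |Hfun a x - Hfun a x₀| :=
    Real.sq_sqrt (abs_nonneg _)
  have htri : |u x| ≤ |u x₀| + C * Real.sqrt |Hfun a x - Hfun a x₀| := by
    calc |u x| ≤ |u x₀| + |u x - u x₀| := by
          have := abs_sub_abs_le_abs_sub (u x) (u x₀); linarith [abs_nonneg (u x - u x₀)]
      _ ≤ |u x₀| + C * Real.sqrt |Hfun a x - Hfun a x₀| := by linarith
  have h1 : (u x) ^ 2 = |u x| ^ 2 := (sq_abs _).symm
  have h2 : |u x₀| ^ 2 = (u x₀) ^ 2 := sq_abs _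
  have hsq : |u x| ^ 2 ≤ 2 * |u x₀| ^ 2 + 2 * C ^ 2 * |Hfun a x - Hfun a x₀| := by
    nlinarith [sq_nonneg (|u x₀| - C * Real.sqrt |Hfun a x - Hfun a x₀|),
      abs_nonneg (u x), abs_nonneg (u x₀), Real.sqrt_nonneg |Hfun a x - Hfun a x₀|,
      mul_pos hC hC]
  unfold Gd
  nlinarith [mul_pos hC hC]

end DegenerateControl3

namespace DegenerateControl
open DegenerateControl2 DegenerateControl3

/-- Lemma 2.1: under the assumptions on the degenerate diffusion
coefficient `a`, the embedding `H¹_a(Ω) ↪ L²(Ω)` is compact (every bounded sequence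
in `H¹_a(Ω)` has a subsequence converging in `L²(Ω)`); in particular there is a
constant `C > 0` with `‖y‖_{L²(Ω)} ≤ C ‖y‖_{H¹_a(Ω)}` for every `y ∈ H¹_a(Ω)`. -/
theorem compact_embedding_H1a_L2 (a : ℝ → ℝ) (ha : DiffCoeff a) :
    (∀ u : ℕ → ℝ → ℝ, (∀ n, MemH1a a (u n)) →
      (∃ C : ℝ, ∀ n, H1aNorm a (u n) ≤ C) →
      ∃ (g : ℝ → ℝ) (k : ℕ → ℕ), StrictMono k ∧ MemLp g 2 muO ∧
        Tendsto (fun n => L2norm (fun x => u (k n) x - g x)) atTop (nhds 0)) ∧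
    (∃ C : ℝ, 0 < C ∧ ∀ y : ℝ → ℝ, MemH1a a y → L2norm y ≤ C * H1aNorm a y) := by

  constructor
  · intro u hu ⟨C₀, hC₀⟩
    set C : ℝ := |C₀| + 1 with hCdef
    have hC : 0 < C := by positivity
    have hCb : ∀ n, H1aNorm a (u n) ≤ C := fun n =>
      (hC₀ n).trans (by simp [hCdef]; linarith [le_abs_self C₀])
    -- basic bounds
    have hH1sq : ∀ n, H1aSq a (u n) ≤ C ^ 2 := by
      intro n
      have hEnn : 0 ≤ ∫ x, a x * (deriv (u n) x) ^ 2 ∂muO := by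
        rw [energy_eq ha]; exact integral_nonneg (fun x => sq_nonneg _)
      have hnn : 0 ≤ H1aSq a (u n) :=
        add_nonneg (integral_nonneg (fun x => sq_nonneg _)) hEnn
      calc H1aSq a (u n) = (Real.sqrt (H1aSq a (u n))) ^ 2 := (Real.sq_sqrt hnn).symm
        _ ≤ C ^ 2 := pow_le_pow_left₀ (Real.sqrt_nonneg _) (hCb n) 2
    have hL2 : ∀ n, L2sq (u n) ≤ C ^ 2 := by
      intro n
      have hEnn : 0 ≤ ∫ x, a x * (deriv (u n) x) ^ 2 ∂muO := by
        rw [energy_eq ha]; exact integral_nonneg (fun x => sq_nonneg _)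
      have := hH1sq n; unfold H1aSq at this; linarith
    have hE : ∀ n, ∫ s, (Real.sqrt (a s) * deriv (u n) s) ^ 2 ∂muO ≤ C ^ 2 := by
      intro n
      have hLnn : 0 ≤ L2sq (u n) := integral_nonneg (fun x => sq_nonneg _)
      have := hH1sq n; unfold H1aSq at this; rw [energy_eq ha] at this; linarith
    have hGpt : ∀ n, ∀ x ∈ Omg, (u n x) ^ 2 ≤ Gd a C x := fun n x hx =>
      pointwise_bound ha (hu n) hC (hL2 n) (hE n) hx
    -- diagonal subsequence on rationals
    set B : ℚ → ℝ := fun q => Real.sqrt (Gd a C q) with hBdef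
    set K : Set (ℚ → ℝ) := Set.univ.pi (fun q => Icc (-(B q)) (B q)) with hKdef
    set Φ : ℕ → ℚ → ℝ := fun n q => if (q : ℝ) ∈ Omg then u n q else 0 with hΦdef
    have hΦK : ∀ n, Φ n ∈ K := by
      intro n
      rw [hKdef, Set.mem_univ_pi]
      intro q
      by_cases hq : (q : ℝ) ∈ Omg
      · have hb : |u n q| ≤ B q := by
          rw [hBdef, ← Real.sqrt_sq_eq_abs]
          exact Real.sqrt_le_sqrt (hGpt n q hq)
        simp only [hΦdef, if_pos hq]
        exact abs_le.mp hb
      · simp only [hΦdef, if_neg hq]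
        constructor <;> simp [hBdef, neg_nonpos, Real.sqrt_nonneg]
    have hK : IsCompact K := isCompact_univ_pi (fun q => isCompact_Icc)
    obtain ⟨y, _, k, hk, htend⟩ := hK.tendsto_subseq hΦK
    have hcoord : ∀ q : ℚ, Tendsto (fun n => Φ (k n) q) atTop (nhds (y q)) := fun q =>
      tendsto_pi_nhds.mp htend q
    -- pointwise Cauchy on Ω
    have hcauchy : ∀ x ∈ Omg, CauchySeq (fun n => u (k n) x) := by
      intro x hx
      rw [Metric.cauchySeq_iff]
      intro ε hε
      have hε4 : (0:ℝ) < ε / 4 := by linarith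
      -- choose a rational close to x
      obtain ⟨δ, hδ, hδprop⟩ := Metric.continuousAt_iff.mp (H_contAt ha hx)
        ((ε / (4 * C)) ^ 2) (by positivity)
      have hlt : max (x - δ) ((x - 1) / 2) < x := by
        apply max_lt (by linarith)
        have := hx.1; have := hx.2; linarith
      obtain ⟨q, hq1, hq2⟩ := exists_rat_btwn hlt
      have hqΩ : (q : ℝ) ∈ Omg := by
        constructor
        · have h1 : (x - 1) / 2 < q := lt_of_le_of_lt (le_max_right _ _) hq1
          have := hx.1; linarith
        · have := hx.2; linarith
      have hqd : dist (q : ℝ) x < δ := by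
        rw [Real.dist_eq, abs_of_nonpos (by linarith)]
        have h1 : x - δ < q := lt_of_le_of_lt (le_max_left _ _) hq1
        linarith
      have hHd : |Hfun a x - Hfun a q| < (ε / (4 * C)) ^ 2 := by
        have := hδprop hqd
        rwa [Real.dist_eq, abs_sub_comm] at this
      have hestq : ∀ m, |u m x - u m q| ≤ C * Real.sqrt |Hfun a x - Hfun a q| :=
        fun m => key_est_abs ha (hu m) hC.le (hE m) hqΩ hx
      have hsqrtlt : C * Real.sqrt |Hfun a x - Hfun a q| < ε / 4 := by
        have h1 : Real.sqrt |Hfun a x - Hfun a q| < ε / (4 * C) := by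
          have := Real.sqrt_lt_sqrt (abs_nonneg _) hHd
          rwa [Real.sqrt_sq (by positivity)] at this
        calc C * Real.sqrt |Hfun a x - Hfun a q| < C * (ε / (4 * C)) :=
              mul_lt_mul_of_pos_left h1 hC
          _ = ε / 4 := by field_simp
      -- the rational coordinate sequence is Cauchy
      have hΦq : ∀ m, Φ m q = u m q := fun m => by simp only [hΦdef, if_pos hqΩ]
      have hvc : CauchySeq (fun n => u (k n) (q : ℝ)) := by
        have := (hcoord q).cauchySeq
        simpa only [hΦq] using this
      obtain ⟨N, hN⟩ := Metric.cauchySeq_iff.mp hvc (ε / 4) hε4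
      refine ⟨N, fun m hm n hn => ?_⟩
      have h1 := hestq (k m)
      have h2 := hestq (k n)
      have h3 := hN m hm n hn
      rw [Real.dist_eq] at h3 ⊢
      calc |u (k m) x - u (k n) x|
          ≤ |u (k m) x - u (k m) q| + |u (k m) q - u (k n) q| + |u (k n) q - u (k n) x| := by
            have := abs_sub_le (u (k m) x) (u (k m) q) (u (k n) x)
            have := abs_sub_le (u (k m) q) (u (k n) q) (u (k n) x)
            linarith
        _ < ε / 4 + ε / 4 + ε / 4 := by
            have hA : |u (k m) x - u (k m) q| < ε / 4 := lt_of_le_of_lt h1 hsqrtlt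
            have hB : |u (k n) q - u (k n) x| < ε / 4 := by
              rw [abs_sub_comm]; exact lt_of_le_of_lt h2 hsqrtlt
            linarith
        _ < ε := by linarith
    -- the limit function
    set g : ℝ → ℝ := fun x => limUnder atTop (fun n => u (k n) x) with hgdef
    have htg : ∀ x ∈ Omg, Tendsto (fun n => u (k n) x) atTop (nhds (g x)) := by
      intro x hx
      obtain ⟨L, hL⟩ := cauchySeq_tendsto_of_complete (hcauchy x hx)
      have : g x = L := hL.limUnder_eq
      rwa [this]
    have gmeas : AEStronglyMeasurable g muO :=
      aestronglyMeasurable_of_tendsto_ae atTop (fun n => (hu (k n)).1.aestronglyMeasurable)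
        (by filter_upwards [ae_mem_omg] with x hx using htg x hx)
    have gbound : ∀ x ∈ Omg, (g x) ^ 2 ≤ Gd a C x := by
      intro x hx
      have h1 : Tendsto (fun n => (u (k n) x) ^ 2) atTop (nhds ((g x) ^ 2)) := (htg x hx).pow 2
      exact le_of_tendsto h1 (Eventually.of_forall (fun n => hGpt (k n) x hx))
    have gmem : MemLp g 2 muO := by
      refine (memLp_two_iff_integrable_sq gmeas).mpr ?_
      refine (Gd_integrable ha C).mono' ?_ ?_
      · simpa only [pow_two] using (show AEStronglyMeasurable (fun x => g x * g x) muO from gmeas.mul gmeas)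
      · filter_upwards [ae_mem_omg] with x hx
        rw [Real.norm_eq_abs, abs_of_nonneg (sq_nonneg _)]
        exact gbound x hx
    -- dominated convergence
    have hdct : Tendsto (fun n => ∫ x, (u (k n) x - g x) ^ 2 ∂muO) atTop (nhds 0) := by
      have h0 : (0:ℝ) = ∫ _ : ℝ, (0:ℝ) ∂muO := by simp
      rw [h0]
      refine tendsto_integral_of_dominated_convergence (fun x => 4 * Gd a C x)
        (fun n => ?_) ((Gd_integrable ha C).const_mul 4) (fun n => ?_) ?_
      · have := ((hu (k n)).1.aestronglyMeasurable.sub gmeas)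
        simpa only [pow_two] using (show AEStronglyMeasurable (fun x => (u (k n) x - g x) * (u (k n) x - g x)) muO from this.mul this)
      · filter_upwards [ae_mem_omg] with x hx
        rw [Real.norm_eq_abs, abs_of_nonneg (sq_nonneg _)]
        nlinarith [hGpt (k n) x hx, gbound x hx, sq_nonneg (u (k n) x + g x)]
      · filter_upwards [ae_mem_omg] with x hx
        have : Tendsto (fun n => (u (k n) x - g x) ^ 2) atTop (nhds ((g x - g x) ^ 2)) :=
          ((htg x hx).sub tendsto_const_nhds).pow 2
        simpa using this
    refine ⟨g, k, hk, gmem, ?_⟩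
    have hsqrt : Tendsto Real.sqrt (nhds 0) (nhds 0) := by
      simpa using (Real.continuous_sqrt.tendsto 0)
    have := hsqrt.comp hdct
    simpa only [Function.comp_def, L2norm, L2sq] using this
  · refine ⟨1, one_pos, fun y hy => ?_⟩
    rw [one_mul]
    apply Real.sqrt_le_sqrt
    have hEnn : 0 ≤ ∫ x, a x * (deriv y x) ^ 2 ∂muO := by
      rw [energy_eq ha]; exact integral_nonneg (fun x => sq_nonneg _)
    unfold H1aSq; linarith


end DegenerateControl
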